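/- Demographic Influence generalizes Friend Circle: let (G, S, w) be a Friend Circle position with G = (V, E). Define the Demographic Influence position Z' = (G', Θ, D) where G' is the line graph of G (vertices are the edges of G, with two vertices adjacent iff the corresponding edges of G share an endpoint); Θ(v_e) = 1 if w(e) = false and Θ(v_e) = 0 if w(e) = true; and D = { D_s : s ∈ S } where D_s = { v_e : e is incident to s }. Then Friend Circle on (G, S, w) is isomorphic (as a game tree, via the move correspondence s ↔ (D_s, 1)) to the Demographic Influence game on Z'. -/

import Mathlib

open scoped Classical

noncomputable section

namespace TW

variable {ι κ : Type*}

/-- A column `j` of a Crosswise AND position is feasible if it contains a `true` (green) entry. -/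
def Feasible (B : ι → κ → Bool) (j : κ) : Prop := ∃ i, B i j = true

/-- The Crosswise AND move at column `j`: if `B i j = false` then row `i` becomes all false;
otherwise row `i` is unchanged except that entry `(i, j)` becomes false. -/
def move (B : ι → κ → Bool) (j : κ) : ι → κ → Bool :=
  fun i j' => if B i j = false then false else if j' = j then false else B i j'

/-- A vertex `v` is a feasible Friend Circle move for position `(G, S, w)` if `v` is a
seed and some edge of `G` incident to `v` is labelled false. -/
def fcFeasible {V : Type*} (G : SimpleGraph V) (S : Finset V) (w : Sym2 V → Bool)
    (v : V) : Prop :=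
  v ∈ S ∧ ∃ x, G.Adj v x ∧ w s(v, x) = false

/-- The Friend Circle move at `v`: every edge incident to `v` becomes true, and every
edge incident to a neighbour `x` of `v` whose edge `(v, x)` was already true becomes
true; all other edge labels are unchanged (labels of non-edges are never changed). -/
def fcMove {V : Type*} (G : SimpleGraph V) (w : Sym2 V → Bool) (v : V) :
    Sym2 V → Bool :=
  fun e =>
    if e ∈ G.edgeSet ∧ (v ∈ e ∨ ∃ x ∈ e, G.Adj v x ∧ w s(v, x) = true) then true
    else w e

/-- The set of false-labelled edges of `G`. -/
def falseEdges {V : Type*} [Fintype V] [DecidableEq V] (G : SimpleGraph V)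
    (w : Sym2 V → Bool) : Finset (Sym2 V) :=
  Finset.univ.filter fun e => e ∈ G.edgeSet ∧ w e = false

theorem fcMove_false_of {V : Type*} {G : SimpleGraph V} {w : Sym2 V → Bool} {v : V}
    {e : Sym2 V} (h : fcMove G w v e = false) : w e = false := by
  unfold fcMove at h
  split_ifs at h <;> simp_all

theorem falseEdges_fcMove_lt {V : Type*} [Fintype V] [DecidableEq V]
    {G : SimpleGraph V} {S : Finset V} {w : Sym2 V → Bool} {v : V}
    (h : fcFeasible G S w v) :
    (falseEdges G (fcMove G w v)).card < (falseEdges G w).card := by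
  obtain ⟨-, x, hadj, hw⟩ := h
  apply Finset.card_lt_card
  refine (Finset.ssubset_iff_of_subset ?_).mpr ?_
  · intro e he
    simp only [falseEdges, Finset.mem_filter, Finset.mem_univ, true_and] at he ⊢
    exact ⟨he.1, fcMove_false_of he.2⟩
  · refine ⟨s(v, x), ?_, ?_⟩
    · simp [falseEdges, SimpleGraph.mem_edgeSet, hadj, hw]
    · simp [falseEdges, fcMove, SimpleGraph.mem_edgeSet, hadj]

/-- Normal-play outcome for Friend Circle: the position is a first-player win. -/
def fcFirstWins {V : Type*} [Fintype V] [DecidableEq V] (G : SimpleGraph V)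
    (S : Finset V) (w : Sym2 V → Bool) : Prop :=
  ∃ v, ∃ _ : fcFeasible G S w v, ¬ fcFirstWins G S (fcMove G w v)
termination_by (falseEdges G w).card
decreasing_by
  rename_i h
  exact falseEdges_fcMove_lt h

/-- A Demographic Influence move `(Dk, q)` is feasible if `q ≥ 1` and some member of the
demographic `Dk` has threshold at least `q`. -/
def diFeasible {V : Type*} (Θ : V → ℤ) (Dk : Finset V) (q : ℕ) : Prop :=
  1 ≤ q ∧ ∃ v ∈ Dk, (q : ℤ) ≤ Θ v

/-- The Demographic Influence move `(Dk, q)`: first every member of `Dk` has its value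
reduced by `q`; then every member of `Dk` whose value was `≥ 0` before the move and is
`< 0` after the subtraction sets the value of each of its neighbours in `G` to `-1`. -/
def diMove {V : Type*} (G : SimpleGraph V) (Dk : Finset V) (Θ : V → ℤ) (q : ℕ) :
    V → ℤ :=
  fun v =>
    if ∃ u ∈ Dk, 0 ≤ Θ u ∧ Θ u - q < 0 ∧ G.Adj u v then -1
    else if v ∈ Dk then Θ v - q else Θ v

/-- The line graph of `G`: its vertices are the edges of `G`, two of them adjacent iff
they are distinct and share an endpoint. -/
def lineG {V : Type*} (G : SimpleGraph V) : SimpleGraph G.edgeSet where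
  Adj e f := e ≠ f ∧ ∃ x : V, x ∈ (e : Sym2 V) ∧ x ∈ (f : Sym2 V)
  symm := by
    constructor
    rintro e f ⟨hne, x, hx1, hx2⟩
    exact ⟨hne.symm, x, hx2, hx1⟩
  loopless := by
    constructor
    rintro e ⟨hne, -⟩
    exact hne rfl

/-- `FCDIEq G S D w Θ` says that the Friend Circle game on `(G, S, w)` and the
Demographic Influence game on `(lineG G, Θ, D)` have isomorphic game trees via the move
correspondence `s ↔ (D s, 1)`: the feasible Demographic Influence moves are exactly the
pairs `(D s, 1)` for feasible Friend Circle seeds `s`, and the move operations commute,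
recursively. -/
def FCDIEq {V : Type*} [Fintype V] [DecidableEq V] (G : SimpleGraph V) (S : Finset V)
    (D : {s : V // s ∈ S} → Finset G.edgeSet)
    (w : Sym2 V → Bool) (Θ : G.edgeSet → ℤ) : Prop :=
  (∀ (s : {s : V // s ∈ S}) (q : ℕ),
      diFeasible Θ (D s) q ↔ (q = 1 ∧ fcFeasible G S w s.1)) ∧
  ∀ s : {s : V // s ∈ S}, ∀ _ : fcFeasible G S w s.1,
    FCDIEq G S D (fcMove G w s.1) (diMove (lineG G) (D s) Θ 1)
termination_by (falseEdges G w).card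
decreasing_by
  rename_i h
  exact falseEdges_fcMove_lt h

/-- The invariant relating a Friend Circle labelling `w` with a Demographic Influence
threshold function `Θ` on the line graph. -/
def Inv {V : Type*} (G : SimpleGraph V) (w : Sym2 V → Bool) (Θ : G.edgeSet → ℤ) : Prop :=
  (∀ e : G.edgeSet, w ↑e = false → Θ e = 1) ∧
  (∀ e : G.edgeSet, w ↑e = true → Θ e ≤ 0) ∧
  (∀ e : G.edgeSet, Θ e < 0 → ∃ z ∈ (e : Sym2 V), ∀ f : G.edgeSet, z ∈ (f : Sym2 V) → Θ f ≤ 0)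

lemma Inv.le_one {V : Type*} {G : SimpleGraph V} {w : Sym2 V → Bool} {Θ : G.edgeSet → ℤ}
    (hI : Inv G w Θ) (e : G.edgeSet) : Θ e ≤ 1 := by
  cases h : w ↑e
  · exact (hI.1 e h).le
  · linarith [hI.2.1 e h]

lemma inv_step {V : Type*} [Fintype V] [DecidableEq V] {G : SimpleGraph V} {S : Finset V}
    {w : Sym2 V → Bool} {Θ : G.edgeSet → ℤ} (hI : Inv G w Θ)
    {s : V} (hs : fcFeasible G S w s) :
    Inv G (fcMove G w s)
      (diMove (lineG G) (Finset.univ.filter fun e : G.edgeSet => s ∈ (e : Sym2 V)) Θ 1) := by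
  obtain ⟨h1, h2, h3⟩ := hI
  set Dk : Finset G.edgeSet := Finset.univ.filter fun e : G.edgeSet => s ∈ (e : Sym2 V) with hDk
  have hmem : ∀ e : G.edgeSet, e ∈ Dk ↔ s ∈ (e : Sym2 V) := by
    intro e; simp [hDk]
  set C : G.edgeSet → Prop :=
    fun e => ∃ u ∈ Dk, 0 ≤ Θ u ∧ Θ u - ((1 : ℕ) : ℤ) < 0 ∧ (lineG G).Adj u e with hC
  set Θ' : G.edgeSet → ℤ := diMove (lineG G) Dk Θ 1 with hΘ'
  have hval : ∀ e : G.edgeSet, Θ' e = if C e then -1 else if e ∈ Dk then Θ e - 1 else Θ e := by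
    intro e
    simp only [hΘ', diMove, hC, Nat.cast_one]
  have hle1 : ∀ e : G.edgeSet, Θ e ≤ 1 := Inv.le_one ⟨h1, h2, h3⟩
  have hmono : ∀ e : G.edgeSet, Θ e ≤ 0 → Θ' e ≤ 0 := by
    intro e he; rw [hval]; split_ifs <;> linarith
  -- the key lemma: spreading through a true edge at `s`
  have hkey : ∀ e : G.edgeSet, s ∉ (e : Sym2 V) → ∀ x ∈ (e : Sym2 V),
      ∀ hadj : G.Adj s x, w s(s, x) = true → Θ' e ≤ 0 := by
    intro e hse x hxe hadj hw
    set u : G.edgeSet := ⟨s(s, x), hadj⟩ with hu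
    have hu2 : Θ u ≤ 0 := h2 u hw
    have huD : u ∈ Dk := (hmem u).mpr (Sym2.mem_mk_left s x)
    rcases lt_or_eq_of_le hu2 with hlt | heq
    · -- Θ u < 0 : use the third invariant
      obtain ⟨z, hz, hall⟩ := h3 u hlt
      have hz' : z = s ∨ z = x := Sym2.mem_iff.mp hz
      rcases hz' with rfl | rfl
      · -- impossible: fcFeasible gives a false edge at s
        obtain ⟨-, y, hady, hwy⟩ := hs
        have : Θ (⟨s(z, y), hady⟩ : G.edgeSet) = 1 := h1 _ hwy
        have := hall ⟨s(z, y), hady⟩ (Sym2.mem_mk_left z y)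
        omega
      · exact hmono e (hall e hxe)
    · -- Θ u = 0 : C e holds
      have hne : u ≠ e := by
        intro h; exact hse (h ▸ Sym2.mem_mk_left s x)
      have hCe : C e := ⟨u, huD, heq.ge, by omega,
        ⟨hne, x, Sym2.mem_mk_right s x, hxe⟩⟩
      rw [hval, if_pos hCe]; norm_num
  have hA : ∀ e : G.edgeSet, fcMove G w s ↑e = false → Θ' e = 1 := by
    intro e hf
    have hE : (e : Sym2 V) ∈ G.edgeSet := e.2
    unfold fcMove at hf
    split_ifs at hf with hc
    · push_neg at hc
      have hc' := hc hE
      have hse : s ∉ (e : Sym2 V) := hc'.1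
      have hnC : ¬ C e := by
        rintro ⟨u, huD, hu0, hu1, hne, x, hxu, hxe⟩
        have husu : s ∈ (u : Sym2 V) := (hmem u).mp huD
        have hΘu : Θ u = 0 := by omega
        have hwu : w ↑u = true := by
          cases h : w ↑u
          · have := h1 u h; omega
          · rfl
        have hxs : x ≠ s := by rintro rfl; exact hse hxe
        have huval : (u : Sym2 V) = s(s, x) :=
          (Sym2.mem_and_mem_iff hxs.symm).mp ⟨husu, hxu⟩
        have hadj : G.Adj s x := by
          have := u.2; rw [huval] at this; exact this
        exact hc'.2 x hxe hadj (by rw [← huval]; exact hwu)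
      rw [hval, if_neg hnC, if_neg (fun h => hse ((hmem e).mp h))]
      exact h1 e hf
  have hB : ∀ e : G.edgeSet, fcMove G w s ↑e = true → Θ' e ≤ 0 := by
    intro e hf
    by_cases hse : s ∈ (e : Sym2 V)
    · have heD : e ∈ Dk := (hmem e).mpr hse
      rw [hval]; split_ifs with ha
      · norm_num
      · have := hle1 e; omega
    · unfold fcMove at hf
      split_ifs at hf with hc
      · rcases hc.2 with h | ⟨x, hxe, hadj, hw⟩
        · exact absurd h hse
        · exact hkey e hse x hxe hadj hw
      · exact hmono e (h2 e hf)
  refine ⟨hA, hB, ?_⟩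
  intro e hneg
  by_cases hCe : C e
  · obtain ⟨u, huD, hu0, hu1, hne, x, hxu, hxe⟩ := hCe
    refine ⟨x, hxe, ?_⟩
    intro f hxf
    by_cases hfu : f = u
    · subst hfu
      rw [hval]; split_ifs with h1'
      · norm_num
      · have := hle1 f; omega
    · have hCf : C f := ⟨u, huD, hu0, hu1, ⟨Ne.symm hfu, x, hxu, hxf⟩⟩
      rw [hval, if_pos hCf]; norm_num
  · by_cases hD : e ∈ Dk
    · refine ⟨s, (hmem e).mp hD, ?_⟩
      intro f hsf
      have hfD : f ∈ Dk := (hmem f).mpr hsf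
      rw [hval]; split_ifs with h1'
      · norm_num
      · have := hle1 f; omega
    · rw [hval, if_neg hCe, if_neg hD] at hneg
      obtain ⟨z, hz, hall⟩ := h3 e hneg
      exact ⟨z, hz, fun f hzf => hmono f (hall f hzf)⟩

lemma feas_iff {V : Type*} [Fintype V] [DecidableEq V] {G : SimpleGraph V} {S : Finset V}
    {w : Sym2 V → Bool} {Θ : G.edgeSet → ℤ} (hI : Inv G w Θ)
    (s : {s : V // s ∈ S}) (q : ℕ) :
    diFeasible Θ (Finset.univ.filter fun e : G.edgeSet => s.1 ∈ (e : Sym2 V)) q ↔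
      (q = 1 ∧ fcFeasible G S w s.1) := by
  obtain ⟨h1, h2, h3⟩ := hI
  constructor
  · rintro ⟨hq, v, hv, hle⟩
    simp only [Finset.mem_filter, Finset.mem_univ, true_and] at hv
    have hq1 : (1 : ℤ) ≤ (q : ℤ) := by exact_mod_cast hq
    have hwv : w ↑v = false := by
      cases h : w ↑v
      · rfl
      · have := h2 v h; omega
    have hΘv : Θ v = 1 := h1 v hwv
    have hq' : q = 1 := by
      have := Inv.le_one ⟨h1, h2, h3⟩ v
      omega
    obtain ⟨x, hvx⟩ := Sym2.mem_iff_exists.mp hv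
    have hadj : G.Adj s.1 x := by
      have := v.2; rw [hvx] at this; exact this
    exact ⟨hq', s.2, x, hadj, by rw [← hvx]; exact hwv⟩
  · rintro ⟨rfl, -, x, hadj, hw⟩
    refine ⟨le_refl 1, ⟨s(s.1, x), hadj⟩, ?_, ?_⟩
    · simp [Sym2.mem_mk_left]
    · have : Θ ⟨s(s.1, x), hadj⟩ = 1 := h1 _ hw
      omega

lemma main_ind {V : Type*} [Fintype V] [DecidableEq V] (G : SimpleGraph V) (S : Finset V) :
    ∀ (n : ℕ) (w : Sym2 V → Bool) (Θ : G.edgeSet → ℤ),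
      (falseEdges G w).card ≤ n → Inv G w Θ →
      FCDIEq G S (fun s => Finset.univ.filter fun e : G.edgeSet => s.1 ∈ (e : Sym2 V)) w Θ := by
  intro n
  induction n with
  | zero =>
    intro w Θ hn hI
    rw [FCDIEq]
    refine ⟨fun s q => feas_iff hI s q, ?_⟩
    intro s hf
    have := falseEdges_fcMove_lt (S := S) hf
    omega
  | succ n ih =>
    intro w Θ hn hI
    rw [FCDIEq]
    refine ⟨fun s q => feas_iff hI s q, ?_⟩
    intro s hf
    have hlt := falseEdges_fcMove_lt (S := S) hf
    exact ih _ _ (by omega) (inv_step hI hf)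

/-- Demographic Influence generalizes Friend Circle.  For a Friend Circle
position `(G, S, w)`, the Friend Circle game is isomorphic, via the move correspondence
`s ↔ (D_s, 1)`, to the Demographic Influence game on `Z' = (G', Θ, D)` where `G'` is the
line graph of `G`, `Θ(v_e) = 1` if `w e = false` and `Θ(v_e) = 0` if `w e = true`, and
`D_s = {v_e : e incident to s}` for `s ∈ S`. -/
theorem stmt15 {V : Type*} [Fintype V] [DecidableEq V] (G : SimpleGraph V)
    (S : Finset V) (w : Sym2 V → Bool) :
    FCDIEq G S
      (fun s => Finset.univ.filter fun e : G.edgeSet => s.1 ∈ (e : Sym2 V))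
      w
      (fun e => if w e = false then 1 else 0) := by
  refine main_ind G S (falseEdges G w).card w _ le_rfl ?_
  refine ⟨?_, ?_, ?_⟩
  · intro e he; simp [he]
  · intro e he; simp [he]
  · intro e he
    simp only at he
    split_ifs at he <;> omega

end TW
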